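/- Let U = min_j U_j where, for each coordinate j ∈ {1,...,d}, U_j is the maximal number q such that the q smallest j-th components among all requests (with per-type multiplicities capped as in Algorithm 2) sum to at most k·b_j. Then any set of requests that can be packed into k bins of capacity b, all active at a single common time instant, has cardinality at most U. -/

import Mathlib

lemma take_sum_le_of_sublist {L1 L2 : List ℕ} (h : L1.Sublist L2) (h2 : L2.Pairwise (· ≤ ·)) :
    ∀ q ≤ L1.length, (L2.take q).sum ≤ (L1.take q).sum := by
  induction h with
  | slnil => intro q hq; simp_all
  | @cons l1 l2 a h ih =>
    intro q hq
    match q with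
    | 0 => simp
    | q+1 =>
      have hs2 : l2.Pairwise (· ≤ ·) := h2.of_cons
      have hq2 : q < l2.length := lt_of_lt_of_le hq h.length_le
      have h1 : l2.take (q+1) = l2.take q ++ [l2[q]] := by
        rw [List.take_succ, List.getElem?_eq_getElem hq2]; rfl
      have ha : a ≤ l2[q] :=
        List.rel_of_pairwise_cons h2 (List.getElem_mem hq2)
      calc ((a :: l2).take (q+1)).sum = a + (l2.take q).sum := by simp
        _ ≤ (l2.take (q+1)).sum := by
            rw [h1, List.sum_append, List.sum_singleton, Nat.add_comm]
            exact Nat.add_le_add_left ha _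
        _ ≤ (l1.take (q+1)).sum := ih hs2 (q+1) hq
  | @cons_cons l1 l2 a h ih =>
    intro q hq
    match q with
    | 0 => simp
    | q+1 =>
      simp only [List.take_succ_cons, List.sum_cons]
      exact Nat.add_le_add_left (ih h2.of_cons q (by simpa using hq)) a

lemma sort_take_sum_le {M T : Multiset ℕ} (h : M ≤ T) :
    ((Multiset.sort T (· ≤ ·)).take (Multiset.card M)).sum ≤ M.sum := by
  set L1 := Multiset.sort M (· ≤ ·) with hL1
  set L2 := Multiset.sort T (· ≤ ·) with hL2
  have hsp : List.Subperm L1 L2 := by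
    rw [← Multiset.coe_le, Multiset.sort_eq, Multiset.sort_eq]; exact h
  have hsub : L1.Sublist L2 :=
    List.sublist_of_subperm_of_pairwise hsp (Multiset.pairwise_sort _ _) (Multiset.pairwise_sort _ _)
  have hlen : L1.length = Multiset.card M := Multiset.length_sort _
  have h3 := take_sum_le_of_sublist hsub (Multiset.pairwise_sort _ _) (Multiset.card M) (le_of_eq hlen.symm)
  calc (L2.take (Multiset.card M)).sum ≤ (L1.take (Multiset.card M)).sum := h3
    _ = L1.sum := by rw [← hlen, List.take_length]
    _ = M.sum := by rw [← Multiset.sort_eq M (· ≤ ·), ← hL1]; simp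


open Finset in
/-- Correctness of the upper bound `U = min_j U_j` from Algorithm 2.
Types `i ∈ Fin τ` have vectors `a i`, multiplicities `mult i`; the capped
multiplicity is `p i = min (mult i) (k ⋅ min_{j : a i j > 0} ⌊b j / a i j⌋)`.
`Sj j` is the sorted list of `j`-th components with these multiplicities, and
`Uj j` is the largest `q` such that the `q` smallest entries sum to `≤ k·b j`.
Any collection of requests (counts `c i ≤ mult i`), all active at one common
time instant, that can be packed into `k` bins of capacity `b` has cardinality
at most `min_j Uj j`. -/
theorem stmt9 (d k τ : ℕ) (hd : 0 < d) (b : Fin d → ℕ) (hb : ∀ j, 0 < b j)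
    (a : Fin τ → Fin d → ℕ) (ha : ∀ i, ∃ j, 0 < a i j) (mult : Fin τ → ℕ)
    (p : Fin τ → ℕ)
    (hp : ∀ i, p i = min (mult i) (k * sInf {q : ℕ | ∃ j, 0 < a i j ∧ q = b j / a i j}))
    (Sj : Fin d → List ℕ)
    (hSj : ∀ j, Sj j = Multiset.sort (∑ i : Fin τ, (p i) • ({a i j} : Multiset ℕ)) (· ≤ ·))
    (Uj : Fin d → ℕ)
    (hUjlen : ∀ j, Uj j ≤ (Sj j).length)
    (hUjsum : ∀ j, ((Sj j).take (Uj j)).sum ≤ k * b j)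
    (hUjmax : ∀ j, ∀ q ≤ (Sj j).length, ((Sj j).take q).sum ≤ k * b j → q ≤ Uj j)
    (c : Fin τ → ℕ) (hc : ∀ i, c i ≤ mult i)
    (x : Fin τ → Fin k → ℕ)
    (hx : ∀ i, ∑ j, x i j = c i)
    (hpack : ∀ (bin : Fin k) (coord : Fin d), ∑ i, x i bin * a i coord ≤ b coord) :
    ∑ i, c i ≤ sInf (Set.range Uj) := by
  -- c i ≤ p i
  have hcp : ∀ i, c i ≤ p i := by
    intro i
    rw [hp i]
    refine le_min (hc i) ?_
    have hne : {q : ℕ | ∃ j, 0 < a i j ∧ q = b j / a i j}.Nonempty := by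
      obtain ⟨j', hj'⟩ := ha i; exact ⟨b j' / a i j', j', hj', rfl⟩
    obtain ⟨j', hj'pos, hj'eq⟩ := Nat.sInf_mem hne
    rw [hj'eq, ← hx i]
    calc ∑ bin, x i bin ≤ ∑ _bin : Fin k, b j' / a i j' := by
          refine Finset.sum_le_sum fun bin _ => ?_
          rw [Nat.le_div_iff_mul_le hj'pos]
          calc x i bin * a i j' ≤ ∑ i', x i' bin * a i' j' :=
                Finset.single_le_sum (f := fun i' => x i' bin * a i' j')
                  (fun i' _ => Nat.zero_le _) (Finset.mem_univ i)
            _ ≤ b j' := hpack bin j'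
      _ = k * (b j' / a i j') := by simp [Finset.sum_const]
  have key : ∀ j, ∑ i, c i ≤ Uj j := by
    intro j
    set T : Multiset ℕ := ∑ i : Fin τ, (p i) • ({a i j} : Multiset ℕ) with hT
    set M : Multiset ℕ := ∑ i : Fin τ, (c i) • ({a i j} : Multiset ℕ) with hM
    have hMT : M ≤ T := by
      refine Finset.sum_le_sum fun i _ => ?_
      rw [Multiset.nsmul_singleton, Multiset.nsmul_singleton]
      exact (Multiset.replicate_le_replicate _).2 (hcp i)
    have hcardM : Multiset.card M = ∑ i, c i := by
      simp [hM, Multiset.card_nsmul]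
    have hsumM : M.sum = ∑ i, c i * a i j := by
      rw [hM, ← Multiset.coe_sumAddMonoidHom, map_sum]
      simp [Multiset.nsmul_singleton, Multiset.sum_replicate]
    have hMsum : M.sum ≤ k * b j := by
      rw [hsumM]
      calc ∑ i, c i * a i j = ∑ i, ∑ bin, x i bin * a i j := by
            refine Finset.sum_congr rfl fun i _ => ?_
            rw [← hx i, Finset.sum_mul]
        _ = ∑ bin, ∑ i, x i bin * a i j := Finset.sum_comm
        _ ≤ ∑ _bin : Fin k, b j := Finset.sum_le_sum fun bin _ => hpack bin j
        _ = k * b j := by simp [Finset.sum_const]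
    have hlen : ∑ i, c i ≤ (Sj j).length := by
      rw [hSj j, Multiset.length_sort, ← hT, ← hcardM]
      exact Multiset.card_le_card hMT
    refine hUjmax j (∑ i, c i) hlen ?_
    have := sort_take_sum_le hMT
    rw [hcardM] at this
    calc ((Sj j).take (∑ i, c i)).sum
        = ((Multiset.sort T (· ≤ ·)).take (∑ i, c i)).sum := by rw [hSj j]
      _ ≤ M.sum := this
      _ ≤ k * b j := hMsum
  have hne : (Set.range Uj).Nonempty := Set.range_nonempty_iff_nonempty.mpr ⟨⟨0, hd⟩⟩
  obtain ⟨j0, hj0⟩ := Nat.sInf_mem hne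
  rw [← hj0]
  exact key j0
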